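/- Let X be a geodesic Peano continuum that is semi-locally simply connected, and let (X̃, d) be the space of homotopy classes rel endpoints of paths from x₀ with the length-infimum metric. Then (X̃, d) is a proper geodesic metric space. -/

import Mathlib

open Metric Set ENNReal NNReal

noncomputable section

/-- Arc length of a path in a pseudo-metric space, valued in `ℝ≥0∞`. -/
def pathLen {X : Type*} [PseudoMetricSpace X] {x y : X} (γ : Path x y) : ℝ≥0∞ :=
  eVariationOn γ Set.univ

/-- A metric space is geodesic if any two points are joined by a path whose
length equals their distance. -/
def IsGeodesicSpace (X : Type*) [MetricSpace X] : Prop :=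
  ∀ x y : X, ∃ γ : Path x y, pathLen γ = ENNReal.ofReal (dist x y)

/-- Semi-local simple connectedness: every point has a neighborhood `U` such
that every loop contained in `U` is null-homotopic in `X`. -/
def SemiLocallySimplyConnected (X : Type*) [TopologicalSpace X] : Prop :=
  ∀ x : X, ∃ U ∈ nhds x, ∀ γ : Path x x, Set.range γ ⊆ U → γ.Homotopic (Path.refl x)

/-- A group is finitely presented. -/
def Group.FinitelyPresented (G : Type*) [Group G] : Prop :=
  ∃ (n : ℕ) (rels : Set (FreeGroup (Fin n))), rels.Finite ∧
    Nonempty (PresentedGroup rels ≃* G)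

/-- The space of homotopy-rel-endpoints classes of paths starting at `x₀`. -/
def PathsFrom {X : Type*} [TopologicalSpace X] (x₀ : X) : Type _ :=
  Σ y : X, Path.Homotopic.Quotient x₀ y

/-- The length-infimum distance on `PathsFrom x₀`, valued in `ℝ≥0∞`:
the infimum of lengths of paths `γ` from `α(1)` to `β(1)` such that
`α ∗ γ` is homotopic rel endpoints to `β`. -/
def dTilde {X : Type*} [MetricSpace X] {x₀ : X} (a b : PathsFrom x₀) : ℝ≥0∞ :=
  ⨅ γ : {γ : Path a.1 b.1 // a.2.trans (Path.Homotopic.Quotient.mk γ) = b.2}, pathLen γ.1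

/-- The endpoint projection `X̃ → X`. -/
def endpointProj {X : Type*} [TopologicalSpace X] {x₀ : X} (a : PathsFrom x₀) : X := a.1

/-- The action of a class of a loop `β` at `x₀` on `PathsFrom x₀`, sending `[α]` to `[β ∗ α]`. -/
def loopAct {X : Type*} [TopologicalSpace X] {x₀ : X}
    (g : Path.Homotopic.Quotient x₀ x₀) (a : PathsFrom x₀) : PathsFrom x₀ :=
  ⟨a.1, g.trans a.2⟩

/-- Uniform path connectedness. -/
def UniformlyPathConnected (X : Type*) [MetricSpace X] : Prop :=
  ∃ α : ℝ → ℝ, ∀ x y : X, x ≠ y →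
    ∃ γ : Path x y, Metric.diam (Set.range γ) ≤ α (dist x y)

/-- `π₁(X, x₀)` is uniformly generated: for some `R > 0` it is generated by
classes of loops of diameter at most `R`, conjugated to the basepoint by arbitrary paths. -/
def UniformlyGeneratedPi1 (X : Type*) [MetricSpace X] (x₀ : X) : Prop :=
  ∃ R : ℝ, 0 < R ∧ Subgroup.closure
    {g : FundamentalGroup X x₀ | ∃ (y : X) (p : Path x₀ y) (γ : Path y y),
      Metric.diam (Set.range γ) ≤ R ∧
      g = FundamentalGroup.fromPath (X := TopCat.of X) (Path.Homotopic.Quotient.mk ((p.trans γ).trans p.symm))} = ⊤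

/-- A list of points of `X` is an `r`-chain: consecutive points are at distance at most `r`. -/
def IsChain' {X : Type*} [MetricSpace X] (r : ℝ) : List X → Prop :=
  List.Chain' (fun x y => dist x y ≤ r)

/-- An elementary move at scale `R` between based chains: insertion of one interior
point, with both chains being `R`-chains. -/
def ChainMove {X : Type*} [MetricSpace X] (R : ℝ) (l₁ l₂ : List X) : Prop :=
  ∃ (p q : List X) (x : X), p ≠ [] ∧ q ≠ [] ∧
    l₁ = p ++ q ∧ l₂ = p ++ x :: q ∧ IsChain' R l₁ ∧ IsChain' R l₂

/-- A based `r`-loop is `R`-null-homotopic: it can be reduced to the trivial loop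
by elementary moves at scale `R`. -/
def ChainNull {X : Type*} [MetricSpace X] (R : ℝ) (x₀ : X) (l : List X) : Prop :=
  Relation.ReflTransGen (fun a b => ChainMove R a b ∨ ChainMove R b a) l [x₀, x₀]

/-- Coarse 1-connectedness of a metric space, via chains (edge-paths in Rips
complexes): `X` is `t`-chain connected for some `t > 0`, and every `r`-loop can
be filled at some uniformly larger scale `R`. -/
def CoarselySimplyConnected (X : Type*) [MetricSpace X] : Prop :=
  (∃ t : ℝ, 0 < t ∧ ∀ x y : X, ∃ l : List X, IsChain' t l ∧
      l.head? = some x ∧ l.getLast? = some y) ∧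
  ∀ r : ℝ, 0 < r → ∃ R : ℝ, r ≤ R ∧ ∀ (x₀ : X) (l : List X),
    IsChain' r l → l.head? = some x₀ → l.getLast? = some x₀ → ChainNull R x₀ l

end

noncomputable section

namespace StmtAux

attribute [local instance] Path.Homotopic.setoid

section QAlg

variable {X : Type*} [TopologicalSpace X] {w x y z : X}

open Path.Homotopic

lemma _root_.Path.Homotopic.comp_lift {x₀ x₁ x₂ : X} (P₀ : Path x₀ x₁) (P₁ : Path x₁ x₂) :
    (⟦P₀.trans P₁⟧ : Path.Homotopic.Quotient x₀ x₂) =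
      Path.Homotopic.Quotient.trans ⟦P₀⟧ ⟦P₁⟧ := rfl

/-- symm on quotients -/
def qsymm (p : Path.Homotopic.Quotient x y) : Path.Homotopic.Quotient y x :=
  Quotient.map Path.symm (fun _ _ h => Nonempty.map Path.Homotopy.symm₂ h) p

@[simp] lemma qsymm_lift (p : Path x y) : qsymm ⟦p⟧ = ⟦p.symm⟧ := rfl

lemma qcomp_assoc (p : Path.Homotopic.Quotient w x) (q : Path.Homotopic.Quotient x y)
    (r : Path.Homotopic.Quotient y z) :
    (p.trans q).trans r = p.trans (q.trans r) := by
  induction p using Quotient.inductionOn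
  induction q using Quotient.inductionOn
  induction r using Quotient.inductionOn
  rw [← comp_lift, ← comp_lift, ← comp_lift, ← comp_lift]
  exact Quotient.sound ⟨Path.Homotopy.transAssoc _ _ _⟩

@[simp] lemma qrefl_comp (p : Path.Homotopic.Quotient x y) :
    Path.Homotopic.Quotient.trans ⟦Path.refl x⟧ p = p := by
  induction p using Quotient.inductionOn
  rw [← comp_lift]
  exact Quotient.sound ⟨Path.Homotopy.reflTrans _⟩

@[simp] lemma qcomp_refl (p : Path.Homotopic.Quotient x y) :
    Path.Homotopic.Quotient.trans p ⟦Path.refl y⟧ = p := by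
  induction p using Quotient.inductionOn
  rw [← comp_lift]
  exact Quotient.sound ⟨Path.Homotopy.transRefl _⟩

@[simp] lemma qsymm_comp (p : Path.Homotopic.Quotient x y) :
    (qsymm p).trans p = ⟦Path.refl y⟧ := by
  induction p using Quotient.inductionOn
  rw [qsymm_lift, ← comp_lift]
  exact Quotient.sound ⟨(Path.Homotopy.reflSymmTrans _).symm⟩

@[simp] lemma qcomp_symm (p : Path.Homotopic.Quotient x y) :
    p.trans (qsymm p) = ⟦Path.refl x⟧ := by
  induction p using Quotient.inductionOn
  rw [qsymm_lift, ← comp_lift]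
  exact Quotient.sound ⟨(Path.Homotopy.reflTransSymm _).symm⟩

lemma qcomp_left_cancel (p : Path.Homotopic.Quotient x y) (q r : Path.Homotopic.Quotient y z)
    (h : p.trans q = p.trans r) : q = r := by
  have h2 := congrArg (fun s => (qsymm p).trans s) h
  simpa only [← qcomp_assoc, qsymm_comp, qrefl_comp] using h2

end QAlg

section PathLen

variable {X : Type*} [MetricSpace X] {x y z : X}

lemma pathLen_refl (x : X) : pathLen (Path.refl x) = 0 := by
  apply eVariationOn.constant_on
  intro a ha b hb
  simp only [image_univ, mem_range] at ha hb
  obtain ⟨s, rfl⟩ := ha; obtain ⟨t, rfl⟩ := hb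
  simp [Path.refl_apply]

lemma pathLen_symm (γ : Path x y) : pathLen γ.symm = pathLen γ := by
  have h1 : (γ.symm : unitInterval → X) = (γ : unitInterval → X) ∘ unitInterval.symm := by
    funext t; simp [Path.symm_apply]
  have h2 : AntitoneOn unitInterval.symm (univ : Set unitInterval) :=
    fun a _ b _ hab => unitInterval.symm_le_symm.mpr hab
  have h3 := eVariationOn.comp_eq_of_antitoneOn (γ : unitInterval → X) unitInterval.symm h2
  rw [pathLen, h1, h3, image_univ, unitInterval.symm_involutive.surjective.range_eq]
  rfl

lemma edist_le_pathLen (γ : Path x y) (s t : unitInterval) : edist (γ s) (γ t) ≤ pathLen γ :=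
  eVariationOn.edist_le γ (mem_univ s) (mem_univ t)

lemma edist_source_target_le (γ : Path x y) : edist x y ≤ pathLen γ := by
  have := edist_le_pathLen γ 0 1
  simpa using this

lemma range_subset_ball {ε : ℝ} (γ : Path x y) (h : pathLen γ < ENNReal.ofReal ε) :
    range γ ⊆ Metric.ball x ε := by
  rintro _ ⟨t, rfl⟩
  have h1 : edist x (γ t) ≤ pathLen γ := by simpa using edist_le_pathLen γ 0 t
  have := lt_of_le_of_lt h1 h
  rw [Metric.mem_ball, dist_comm]
  exact edist_lt_ofReal.mp this

end PathLen

section SubPath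

variable {X : Type*} [MetricSpace X] {x y z : X}

open unitInterval

/-- scaling map `s ↦ s * t` -/
def sclL (t : I) : I → I := fun s => ⟨(s:ℝ) * t, unitInterval.mul_mem s.2 t.2⟩

lemma sclL_monotone (t : I) : Monotone (sclL t) := fun a b hab =>
  Subtype.mk_le_mk.mpr (mul_le_mul_of_nonneg_right (Subtype.coe_le_coe.mpr hab) t.2.1)

lemma sclL_image (t : I) : sclL t '' univ = Icc 0 t := by
  apply Subset.antisymm
  · rintro _ ⟨s, -, rfl⟩
    refine ⟨Subtype.mk_le_mk.mpr (mul_nonneg s.2.1 t.2.1), Subtype.mk_le_mk.mpr ?_⟩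
    nlinarith [s.2.2, t.2.1]
  · rintro u ⟨-, hu2⟩
    rcases eq_or_lt_of_le (t.2.1 : (0:ℝ) ≤ t) with ht | ht
    · refine ⟨0, mem_univ _, ?_⟩
      have hu2' : (u:ℝ) ≤ t := hu2
      have : (u:ℝ) = 0 := le_antisymm (by rw [ht]; exact hu2') u.2.1
      simp only [sclL]; ext; show (0:I) * (t:ℝ) = (u:ℝ)
      rw [this]; simp
    · refine ⟨⟨(u:ℝ)/(t:ℝ), unitInterval.div_mem u.2.1 t.2.1 hu2⟩, mem_univ _, ?_⟩
      simp only [sclL]; ext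
      show ((u:ℝ)/(t:ℝ)) * t = u
      field_simp

/-- the map `s ↦ t + s*(1-t)` -/
def sclR (t : I) : I → I := fun s =>
  ⟨(t:ℝ) + s * (1 - t), by
    constructor
    · have : (0:ℝ) ≤ (s:ℝ) * (1 - t) := mul_nonneg s.2.1 (unitInterval.one_minus_nonneg t)
      linarith [t.2.1]
    · nlinarith [s.2.2, t.2.2, s.2.1, t.2.1, unitInterval.one_minus_nonneg t]⟩

lemma sclR_monotone (t : I) : Monotone (sclR t) := fun a b hab => by
  apply Subtype.mk_le_mk.mpr
  have h1 : (0:ℝ) ≤ 1 - t := unitInterval.one_minus_nonneg t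
  have hab' : (a:ℝ) ≤ b := hab
  nlinarith

lemma sclR_image (t : I) : sclR t '' univ = Icc t 1 := by
  apply Subset.antisymm
  · rintro _ ⟨s, -, rfl⟩
    constructor
    · apply Subtype.mk_le_mk.mpr
      have : (0:ℝ) ≤ (s:ℝ) * (1 - t) := mul_nonneg s.2.1 (unitInterval.one_minus_nonneg t)
      show (t:ℝ) ≤ t + s * (1-t); linarith
    · exact unitInterval.le_one'
  · rintro u ⟨hu1, -⟩
    rcases eq_or_lt_of_le (unitInterval.le_one' : t ≤ 1) with ht | ht
    · refine ⟨1, mem_univ _, ?_⟩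
      have hut : (t:ℝ) ≤ u := hu1
      have ht1 : (t:ℝ) = 1 := by exact_mod_cast congrArg Subtype.val ht
      have hu : (u:ℝ) = 1 := le_antisymm u.2.2 (by linarith)
      simp only [sclR]; ext; show (t:ℝ) + (1:I) * (1 - (t:ℝ)) = (u:ℝ)
      rw [hu]; simp [ht1]
    · have htlt : (t:ℝ) < 1 := ht
      refine ⟨⟨((u:ℝ) - t)/(1 - t), unitInterval.div_mem (by linarith [show (t:ℝ) ≤ u from hu1])
        (by linarith) (by linarith [u.2.2])⟩, mem_univ _, ?_⟩
      simp only [sclR]; ext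
      show (t:ℝ) + (((u:ℝ) - t)/(1 - t)) * (1 - t) = u
      rw [div_mul_cancel₀ _ (by linarith : (1:ℝ) - (t:ℝ) ≠ 0)]
      ring

/-- left subpath of `γ` up to time `t` -/
def subLeft (γ : Path x y) (t : I) : Path x (γ t) where
  toFun s := γ (sclL t s)
  continuous_toFun := γ.continuous.comp
    ((continuous_subtype_val.mul continuous_const).subtype_mk _)
  source' := by
    show γ (sclL t 0) = x
    have h0 : sclL t 0 = 0 := by ext; show (0:I) * (t:ℝ) = ((0:I):ℝ); simp
    rw [h0]; exact γ.source
  target' := by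
    show γ (sclL t 1) = γ t
    have h1 : sclL t 1 = t := by ext; show (1:I) * (t:ℝ) = (t:ℝ); simp
    rw [h1]

/-- right subpath of `γ` from time `t` -/
def subRight (γ : Path x y) (t : I) : Path (γ t) y where
  toFun s := γ (sclR t s)
  continuous_toFun := γ.continuous.comp
    ((continuous_const.add (continuous_subtype_val.mul continuous_const)).subtype_mk _)
  source' := by
    show γ (sclR t 0) = γ t
    have h0 : sclR t 0 = t := by ext; show (t:ℝ) + (0:I) * (1 - (t:ℝ)) = (t:ℝ); simp
    rw [h0]
  target' := by
    show γ (sclR t 1) = y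
    have h1 : sclR t 1 = 1 := by
      ext; show (t:ℝ) + (1:I) * (1 - (t:ℝ)) = ((1:I):ℝ); simp
    rw [h1]; exact γ.target

lemma pathLen_subLeft (γ : Path x y) (t : I) :
    pathLen (subLeft γ t) = eVariationOn γ (Icc 0 t) := by
  have h1 : ((subLeft γ t : I → X)) = (γ : I → X) ∘ sclL t := rfl
  rw [pathLen, h1, eVariationOn.comp_eq_of_monotoneOn _ _ ((sclL_monotone t).monotoneOn _),
    sclL_image]

lemma pathLen_subRight (γ : Path x y) (t : I) :
    pathLen (subRight γ t) = eVariationOn γ (Icc t 1) := by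
  have h1 : ((subRight γ t : I → X)) = (γ : I → X) ∘ sclR t := rfl
  rw [pathLen, h1, eVariationOn.comp_eq_of_monotoneOn _ _ ((sclR_monotone t).monotoneOn _),
    sclR_image]

lemma eVariationOn_split (γ : Path x y) (t : I) :
    eVariationOn γ (Icc 0 t) + eVariationOn γ (Icc t 1) = pathLen γ := by
  have h := eVariationOn.Icc_add_Icc (f := (γ : I → X)) (s := univ)
    (unitInterval.nonneg' : (0:I) ≤ t) (unitInterval.le_one' : t ≤ 1) (mem_univ t)
  simp only [Set.univ_inter] at h
  rw [pathLen, unitInterval.univ_eq_Icc]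
  exact h

/-- reparametrization function exhibiting `(subLeft γ t).trans (subRight γ t)` as
a reparametrization of `γ`. -/
def splitReparamFun (t : I) (s : I) : I :=
  if h : (s:ℝ) ≤ 1/2 then
    sclL t ⟨2 * s, ⟨mul_nonneg (by norm_num) s.2.1, by linarith⟩⟩
  else sclR t ⟨2 * s - 1, unitInterval.two_mul_sub_one_mem_iff.mpr ⟨by linarith, s.2.2⟩⟩

lemma continuous_splitReparamFun (t : I) : Continuous (splitReparamFun t) := by
  have hcoe : (fun s : I => ((splitReparamFun t s : I) : ℝ)) = fun s : I =>
      if (s:ℝ) ≤ 1/2 then 2 * (s:ℝ) * (t:ℝ) else (t:ℝ) + (2 * (s:ℝ) - 1) * (1 - (t:ℝ)) := by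
    funext s
    unfold splitReparamFun
    by_cases h : (s:ℝ) ≤ 1/2
    · rw [dif_pos h, if_pos h]; rfl
    · rw [dif_neg h, if_neg h]; rfl
  have : Continuous fun s : I => ((splitReparamFun t s : I) : ℝ) := by
    rw [hcoe]
    apply Continuous.if_le
    · exact ((continuous_const.mul continuous_subtype_val).mul continuous_const)
    · exact continuous_const.add (((continuous_const.mul continuous_subtype_val).sub
        continuous_const).mul continuous_const)
    · exact continuous_subtype_val
    · exact continuous_const
    · intro s hs; rw [hs]; ring
  exact continuous_induced_rng.mpr this

lemma splitReparamFun_zero (t : I) : splitReparamFun t 0 = 0 := by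
  unfold splitReparamFun
  rw [dif_pos (by norm_num : ((0:I):ℝ) ≤ 1/2)]
  ext; show (2 * ((0:I):ℝ)) * (t:ℝ) = ((0:I):ℝ); simp

lemma splitReparamFun_one (t : I) : splitReparamFun t 1 = 1 := by
  unfold splitReparamFun
  rw [dif_neg (by norm_num : ¬ ((1:I):ℝ) ≤ 1/2)]
  ext; show (t:ℝ) + (2 * ((1:I):ℝ) - 1) * (1 - (t:ℝ)) = ((1:I):ℝ); simp; ring

lemma subLeft_trans_subRight (γ : Path x y) (t : I) :
    (subLeft γ t).trans (subRight γ t) = γ.reparam (splitReparamFun t)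
      (continuous_splitReparamFun t) (splitReparamFun_zero t) (splitReparamFun_one t) := by
  ext s
  rw [Path.trans_apply]
  simp only [Path.coe_reparam, Function.comp_apply]
  unfold splitReparamFun
  split_ifs with h
  · rfl
  · rfl

lemma subLeft_trans_subRight_homotopic (γ : Path x y) (t : I) :
    ((subLeft γ t).trans (subRight γ t)).Homotopic γ := by
  rw [subLeft_trans_subRight]
  exact ⟨(Path.Homotopy.reparam γ (splitReparamFun t) (continuous_splitReparamFun t)
    (splitReparamFun_zero t) (splitReparamFun_one t)).symm⟩

end SubPath

section VarCont

variable {X : Type*} [MetricSpace X] {x y : X}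

open unitInterval

lemma varAdd (γ : Path x y) {a b c : I} (hab : a ≤ b) (hbc : b ≤ c) :
    eVariationOn γ (Icc a b) + eVariationOn γ (Icc b c) = eVariationOn γ (Icc a c) := by
  have h := eVariationOn.Icc_add_Icc (f := (γ : I → X)) (s := Icc a c) hab hbc ⟨hab, hbc⟩
  simp only [Set.Icc_inter_Icc, sup_idem, inf_idem, sup_eq_right.mpr hab,
    inf_eq_right.mpr hbc] at h
  exact h

lemma variation_right_approx (γ : Path x y) (hfin : pathLen γ ≠ ⊤) (u : I) (hu : u < 1)
    {ηr : ℝ} (hη : 0 < ηr) :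
    ∃ t : I, u < t ∧ eVariationOn γ (Icc u t) ≤ ENNReal.ofReal ηr := by
  set η' : ℝ := ηr / 2 with hη'def
  have hη' : 0 < η' := by positivity
  set W := eVariationOn (γ : I → X) (Icc u 1) with hWdef
  have hWfin : W ≠ ⊤ := by
    refine ne_top_of_le_ne_top hfin (eVariationOn.mono _ (subset_univ _))
  by_cases hWsmall : W ≤ ENNReal.ofReal η'
  · refine ⟨1, hu, ?_⟩
    refine le_trans (le_trans (eVariationOn.mono _ (Icc_subset_Icc_right le_one')) hWsmall) ?_
    exact ENNReal.ofReal_le_ofReal (by linarith)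
  · push_neg at hWsmall
    have hW0 : W ≠ 0 := by
      intro h; rw [h] at hWsmall; exact absurd hWsmall (by simp)
    have hsub : W - ENNReal.ofReal η' < W :=
      ENNReal.sub_lt_self hWfin hW0 (ENNReal.ofReal_pos.mpr hη').ne'
    have hlt : W - ENNReal.ofReal η' <
        ⨆ p : ℕ × { v : ℕ → I // Monotone v ∧ ∀ i, v i ∈ Icc u 1 },
          ∑ i ∈ Finset.range p.1, edist (γ (p.2.1 (i + 1))) (γ (p.2.1 i)) := hsub
    obtain ⟨⟨n, v, hvmono, hvmem⟩, hsum⟩ := lt_iSup_iff.mp hlt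
    -- continuity threshold
    set ηs : ℝ := η' / (2 * n + 2) with hηsdef
    have hD : (0:ℝ) < 2 * n + 2 := by positivity
    have hηs : 0 < ηs := by positivity
    obtain ⟨r, hr, hcont⟩ := Metric.continuousAt_iff.mp (γ.continuous.continuousAt (x := u)) ηs hηs
    have humem : (u:ℝ) + r/2 ≥ 0 := by
      have := u.2.1; positivity
    set t : I := ⟨min 1 ((u:ℝ) + r/2), ⟨le_min zero_le_one humem, min_le_left _ _⟩⟩ with htdef
    have hut : u < t := by
      rw [← Subtype.coe_lt_coe]
      apply lt_min
      · exact hu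
      · linarith
    have hsmall : ∀ a : I, a ∈ Icc u a → True := fun _ _ => trivial
    have hclose : ∀ a : I, a ∈ Icc u t → edist (γ a) (γ u) ≤ ENNReal.ofReal ηs := by
      intro a ha
      refine (edist_lt_ofReal.mpr (hcont ?_)).le
      rw [Subtype.dist_eq, Real.dist_eq, abs_of_nonneg (sub_nonneg.mpr (Subtype.coe_le_coe.mpr ha.1))]
      have h1 : (a:ℝ) ≤ t := ha.2
      have h2 : (t:ℝ) ≤ (u:ℝ) + r/2 := min_le_right _ _
      linarith
    set c : ℝ≥0∞ := ENNReal.ofReal ηs + ENNReal.ofReal ηs with hcdef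
    set w : ℕ → I := fun i => max (v i) t with hwdef
    have hwmono : Monotone w := fun i j hij => max_le_max (hvmono hij) le_rfl
    have hwmem : ∀ i, w i ∈ Icc t (1:I) := fun i =>
      ⟨le_max_right _ _, max_le (hvmem i).2 le_one'⟩
    have hterm : ∀ i, edist (γ (v (i+1))) (γ (v i)) ≤ edist (γ (w (i+1))) (γ (w i)) + c := by
      intro i
      by_cases hti : t ≤ v i
      · have hwi : w i = v i := max_eq_left hti
        have hwi1 : w (i+1) = v (i+1) := max_eq_left (le_trans hti (hvmono (Nat.le_succ i)))
        rw [hwi, hwi1]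
        exact le_add_right le_rfl
      · push_neg at hti
        have hvi_mem : v i ∈ Icc u t := ⟨(hvmem i).1, hti.le⟩
        have h_vit : edist (γ t) (γ (v i)) ≤ c := by
          calc edist (γ t) (γ (v i)) ≤ edist (γ t) (γ u) + edist (γ u) (γ (v i)) :=
                edist_triangle _ _ _
            _ ≤ ENNReal.ofReal ηs + ENNReal.ofReal ηs := by
                refine add_le_add (hclose t ⟨hut.le, le_rfl⟩) ?_
                rw [edist_comm]; exact hclose _ hvi_mem
        by_cases hti1 : t ≤ v (i+1)
        · have hwi : w i = t := max_eq_right hti.le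
          have hwi1 : w (i+1) = v (i+1) := max_eq_left hti1
          rw [hwi, hwi1]
          calc edist (γ (v (i+1))) (γ (v i)) ≤ edist (γ (v (i+1))) (γ t) + edist (γ t) (γ (v i)) :=
                edist_triangle _ _ _
            _ ≤ edist (γ (v (i+1))) (γ t) + c := add_le_add_right h_vit _
        · push_neg at hti1
          have hvi1_mem : v (i+1) ∈ Icc u t := ⟨(hvmem (i+1)).1, hti1.le⟩
          have : edist (γ (v (i+1))) (γ (v i)) ≤ c := by
            calc edist (γ (v (i+1))) (γ (v i)) ≤
                edist (γ (v (i+1))) (γ u) + edist (γ u) (γ (v i)) := edist_triangle _ _ _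
              _ ≤ ENNReal.ofReal ηs + ENNReal.ofReal ηs := by
                  refine add_le_add (hclose _ hvi1_mem) ?_
                  rw [edist_comm]; exact hclose _ hvi_mem
          exact le_trans this (le_add_left le_rfl)
    have hsum_w : (∑ i ∈ Finset.range n, edist (γ (w (i+1))) (γ (w i))) ≤
        eVariationOn γ (Icc t 1) :=
      eVariationOn.sum_le hwmono hwmem
    have hsum_v : (∑ i ∈ Finset.range n, edist (γ (v (i+1))) (γ (v i))) ≤
        eVariationOn γ (Icc t 1) + (n : ℝ≥0∞) * c := by
      calc (∑ i ∈ Finset.range n, edist (γ (v (i+1))) (γ (v i)))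
          ≤ ∑ i ∈ Finset.range n, (edist (γ (w (i+1))) (γ (w i)) + c) :=
            Finset.sum_le_sum (fun i _ => hterm i)
        _ = (∑ i ∈ Finset.range n, edist (γ (w (i+1))) (γ (w i))) + (n : ℝ≥0∞) * c := by
            rw [Finset.sum_add_distrib, Finset.sum_const, Finset.card_range, nsmul_eq_mul]
        _ ≤ eVariationOn γ (Icc t 1) + (n : ℝ≥0∞) * c := add_le_add_left hsum_w _
    have hnc : (n : ℝ≥0∞) * c ≤ ENNReal.ofReal η' := by
      have hq : (2*(n:ℝ)+2) * ηs = η' := by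
        rw [hηsdef]; field_simp
      have hreal : (n:ℝ) * (ηs + ηs) ≤ η' := by nlinarith [hηs.le]
      calc (n : ℝ≥0∞) * c = ENNReal.ofReal n * ENNReal.ofReal (ηs + ηs) := by
            rw [hcdef, ENNReal.ofReal_natCast, ← ENNReal.ofReal_add hηs.le hηs.le]
        _ = ENNReal.ofReal ((n:ℝ) * (ηs + ηs)) := (ENNReal.ofReal_mul (Nat.cast_nonneg n)).symm
        _ ≤ ENNReal.ofReal η' := ENNReal.ofReal_le_ofReal hreal
    -- now conclude
    have hW_lt : W < eVariationOn γ (Icc t 1) + ENNReal.ofReal η' + ENNReal.ofReal η' := by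
      have h1 : W < (∑ i ∈ Finset.range n, edist (γ (v (i+1))) (γ (v i))) + ENNReal.ofReal η' := by
        rw [← ENNReal.sub_lt_iff_lt_right (by simp) hWsmall.le] at *
        exact lt_of_lt_of_le hsum le_rfl
      calc W < (∑ i ∈ Finset.range n, edist (γ (v (i+1))) (γ (v i))) + ENNReal.ofReal η' := h1
        _ ≤ (eVariationOn γ (Icc t 1) + (n : ℝ≥0∞) * c) + ENNReal.ofReal η' :=
            add_le_add_left hsum_v _
        _ ≤ eVariationOn γ (Icc t 1) + ENNReal.ofReal η' + ENNReal.ofReal η' :=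
            add_le_add_left (add_le_add_right hnc _) _
    have hadd : eVariationOn γ (Icc u t) + eVariationOn γ (Icc t 1) = W :=
      varAdd γ hut.le le_one'
    refine ⟨t, hut, ?_⟩
    have hB : eVariationOn γ (Icc t 1) ≠ ⊤ := by
      refine ne_top_of_le_ne_top hWfin ?_
      exact eVariationOn.mono _ (Icc_subset_Icc_left hut.le)
    have h2 : eVariationOn γ (Icc u t) + eVariationOn γ (Icc t 1) ≤
        (ENNReal.ofReal η' + ENNReal.ofReal η') + eVariationOn γ (Icc t 1) := by
      rw [hadd]
      calc W ≤ eVariationOn γ (Icc t 1) + ENNReal.ofReal η' + ENNReal.ofReal η' := hW_lt.le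
        _ = (ENNReal.ofReal η' + ENNReal.ofReal η') + eVariationOn γ (Icc t 1) := by ring
    have h3 := (ENNReal.add_le_add_iff_right hB).mp h2
    refine le_trans h3 ?_
    rw [← ENNReal.ofReal_add hη'.le hη'.le]
    exact ENNReal.ofReal_le_ofReal (by linarith)

lemma symm_image_Icc (a b : I) : unitInterval.symm '' Icc a b = Icc (σ b) (σ a) := by
  ext z
  constructor
  · rintro ⟨w, ⟨hw1, hw2⟩, rfl⟩
    exact ⟨unitInterval.symm_le_symm.mpr hw2, unitInterval.symm_le_symm.mpr hw1⟩
  · rintro ⟨hz1, hz2⟩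
    refine ⟨σ z, ⟨?_, ?_⟩, unitInterval.symm_symm z⟩
    · exact unitInterval.le_symm_comm.mp hz2
    · exact unitInterval.symm_le_comm.mpr hz1

lemma eVariationOn_symm_Icc (γ : Path x y) (a b : I) :
    eVariationOn (γ.symm : I → X) (Icc a b) = eVariationOn (γ : I → X) (Icc (σ b) (σ a)) := by
  have h1 : (γ.symm : I → X) = (γ : I → X) ∘ unitInterval.symm := by
    funext t; simp [Path.symm_apply]
  have h2 : AntitoneOn unitInterval.symm (Icc a b) :=
    fun p _ q _ hpq => unitInterval.symm_le_symm.mpr hpq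
  rw [h1, eVariationOn.comp_eq_of_antitoneOn _ _ h2, symm_image_Icc]

lemma variation_left_approx (γ : Path x y) (hfin : pathLen γ ≠ ⊤) (u : I) (hu : 0 < u)
    {ηr : ℝ} (hη : 0 < ηr) :
    ∃ s : I, s < u ∧ eVariationOn γ (Icc s u) ≤ ENNReal.ofReal ηr := by
  have husym : σ u < 1 := by
    rw [← unitInterval.symm_zero]
    exact unitInterval.symm_lt_symm.mpr hu
  have hfin' : pathLen γ.symm ≠ ⊤ := by rwa [pathLen_symm]
  obtain ⟨t, hlt, hvar⟩ := variation_right_approx γ.symm hfin' (σ u) husym hη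
  refine ⟨σ t, ?_, ?_⟩
  · rw [← unitInterval.symm_symm u]
    exact unitInterval.symm_lt_symm.mpr hlt
  · rw [eVariationOn_symm_Icc γ (σ u) t, unitInterval.symm_symm] at hvar
    exact hvar

end VarCont

section TransLen

variable {X : Type*} [MetricSpace X] {x y z : X}

open unitInterval

/-- doubling map clamped at 1 -/
def dblL : I → I := fun s => ⟨min (2*(s:ℝ)) 1, ⟨le_min (mul_nonneg (by norm_num) s.2.1) zero_le_one, min_le_right _ _⟩⟩

/-- `2s-1` clamped at 0 -/
def dblR : I → I := fun s => ⟨max (2*(s:ℝ)-1) 0,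
  ⟨le_max_right _ _, max_le (by linarith [s.2.2]) zero_le_one⟩⟩

def half : I := ⟨1/2, by norm_num⟩

lemma pathLen_trans (p : Path x y) (q : Path y z) :
    pathLen (p.trans q) = pathLen p + pathLen q := by
  have hL : eVariationOn (p.trans q) (Icc 0 half) = pathLen p := by
    have heq : EqOn (p.trans q) ((p : I → X) ∘ dblL) (Icc 0 half) := by
      intro s hs
      have hs2 : (s:ℝ) ≤ 1/2 := hs.2
      rw [Path.trans_apply, dif_pos hs2]
      show p _ = p (dblL s)
      congr 1
      ext
      show 2*(s:ℝ) = min (2*(s:ℝ)) 1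
      rw [min_eq_left (by linarith)]
    have hmono : MonotoneOn dblL (Icc 0 half) := by
      intro a _ b _ hab
      exact Subtype.mk_le_mk.mpr (min_le_min (by have : (a:ℝ) ≤ b := hab; linarith) le_rfl)
    have himg : dblL '' (Icc 0 half) = univ := by
      apply Subset.antisymm (subset_univ _)
      intro w _
      refine ⟨⟨(w:ℝ)/2, ⟨div_nonneg w.2.1 (by norm_num), by linarith [w.2.2]⟩⟩, ⟨?_, ?_⟩, ?_⟩
      · exact Subtype.mk_le_mk.mpr (div_nonneg w.2.1 (by norm_num))
      · exact Subtype.mk_le_mk.mpr (by show (w:ℝ)/2 ≤ 1/2; linarith [w.2.2])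
      · ext; show min (2*((w:ℝ)/2)) 1 = w
        rw [show 2*((w:ℝ)/2) = w by ring, min_eq_left w.2.2]
    rw [eVariationOn.eq_of_eqOn heq,
      eVariationOn.comp_eq_of_monotoneOn _ _ hmono, himg, pathLen]
  have hR : eVariationOn (p.trans q) (Icc half 1) = pathLen q := by
    have heq : EqOn (p.trans q) ((q : I → X) ∘ dblR) (Icc half 1) := by
      intro s hs
      have hs2 : (1:ℝ)/2 ≤ (s:ℝ) := hs.1
      rw [Path.trans_apply]
      split_ifs with h
      · have hhalf : (s:ℝ) = 1/2 := le_antisymm h hs2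
        have h1 : (⟨2*(s:ℝ), by rw [hhalf]; norm_num⟩ : I) = (1:I) := by
          ext; show 2*(s:ℝ) = 1; rw [hhalf]; norm_num
        have h2 : dblR s = (0:I) := by
          ext; show max (2*(s:ℝ)-1) 0 = 0
          rw [max_eq_right (by rw [hhalf]; norm_num)]
        show p _ = q (dblR s)
        rw [h2, q.source]
        convert p.target using 2
      · push_neg at h
        show q _ = q (dblR s)
        congr 1
        ext; show 2*(s:ℝ)-1 = max (2*(s:ℝ)-1) 0
        rw [max_eq_left (by linarith)]
    have hmono : MonotoneOn dblR (Icc half 1) := by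
      intro a _ b _ hab
      exact Subtype.mk_le_mk.mpr (max_le_max (by have : (a:ℝ) ≤ b := hab; linarith) le_rfl)
    have himg : dblR '' (Icc half 1) = univ := by
      apply Subset.antisymm (subset_univ _)
      intro w _
      refine ⟨⟨((w:ℝ)+1)/2, ⟨by linarith [w.2.1], by linarith [w.2.2]⟩⟩, ⟨?_, ?_⟩, ?_⟩
      · exact Subtype.mk_le_mk.mpr (by show (1:ℝ)/2 ≤ ((w:ℝ)+1)/2; linarith [w.2.1])
      · exact Subtype.mk_le_mk.mpr (by show ((w:ℝ)+1)/2 ≤ 1; linarith [w.2.2])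
      · ext; show max (2*(((w:ℝ)+1)/2)-1) 0 = w
        rw [show 2*(((w:ℝ)+1)/2)-1 = w by ring, max_eq_left w.2.1]
    rw [eVariationOn.eq_of_eqOn heq,
      eVariationOn.comp_eq_of_monotoneOn _ _ hmono, himg, pathLen]
  have := varAdd (p.trans q) (unitInterval.nonneg' : (0:I) ≤ half) (unitInterval.le_one')
  rw [hL, hR] at this
  rw [pathLen, unitInterval.univ_eq_Icc, ← this]

end TransLen

section Split

variable {X : Type*} [MetricSpace X] {x y : X}

open unitInterval

lemma exists_split (γ : Path x y) (hfin : pathLen γ ≠ ⊤) (V₁ : ℝ≥0∞) (hV₁ : V₁ ≤ pathLen γ)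
    {ηr : ℝ} (hη : 0 < ηr) :
    ∃ t : I, eVariationOn γ (Icc 0 t) ≤ V₁ ∧
      eVariationOn γ (Icc t 1) + V₁ ≤ pathLen γ + ENNReal.ofReal ηr := by
  haveI : Fact ((0:ℝ) ≤ 1) := ⟨zero_le_one⟩
  have hV0 : eVariationOn (γ : I → X) (Icc 0 (0:I)) = 0 := by
    apply eVariationOn.subsingleton
    rw [Set.Icc_self]
    exact subsingleton_singleton
  set S : Set I := {t : I | eVariationOn γ (Icc 0 t) ≤ V₁} with hSdef
  have h0S : (0:I) ∈ S := by rw [hSdef, mem_setOf_eq, hV0]; exact zero_le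
  set T : I := sSup S with hTdef
  have hfinish : ∀ τ : I, eVariationOn γ (Icc 0 τ) ≤ V₁ →
      V₁ ≤ eVariationOn γ (Icc 0 τ) + ENNReal.ofReal ηr →
      ∃ t : I, eVariationOn γ (Icc 0 t) ≤ V₁ ∧
        eVariationOn γ (Icc t 1) + V₁ ≤ pathLen γ + ENNReal.ofReal ηr := by
    intro τ hτ1 hτ2
    refine ⟨τ, hτ1, ?_⟩
    calc eVariationOn γ (Icc τ 1) + V₁
        ≤ eVariationOn γ (Icc τ 1) + (eVariationOn γ (Icc 0 τ) + ENNReal.ofReal ηr) :=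
          add_le_add_right hτ2 _
      _ = (eVariationOn γ (Icc 0 τ) + eVariationOn γ (Icc τ 1)) + ENNReal.ofReal ηr := by ring
      _ = pathLen γ + ENNReal.ofReal ηr := by rw [eVariationOn_split γ τ]
  by_cases hc : eVariationOn γ (Icc 0 T) ≤ V₁
  · by_cases h2 : V₁ ≤ eVariationOn γ (Icc 0 T) + ENNReal.ofReal ηr
    · exact hfinish T hc h2
    · push_neg at h2
      by_cases h1 : T = 1
      · exfalso
        rw [h1] at hc
        have : pathLen γ ≤ V₁ := by
          rw [pathLen, unitInterval.univ_eq_Icc]; exact hc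
        have hV₁' : V₁ = pathLen γ := le_antisymm hV₁ this
        rw [h1] at h2
        have : V₁ ≤ eVariationOn γ (Icc 0 (1:I)) := by
          rw [hV₁', pathLen, unitInterval.univ_eq_Icc]
        exact absurd (le_trans this (le_add_right le_rfl)) (not_le.mpr h2)
      · exfalso
        have hT1 : T < 1 := lt_of_le_of_ne le_one' h1
        obtain ⟨t, htgt, hvar⟩ := variation_right_approx γ hfin T hT1 hη
        have hadd : eVariationOn γ (Icc 0 T) + eVariationOn γ (Icc T t) =
            eVariationOn γ (Icc 0 t) := varAdd γ (unitInterval.nonneg') htgt.le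
        have htS : t ∈ S := by
          rw [hSdef, mem_setOf_eq, ← hadd]
          calc eVariationOn γ (Icc 0 T) + eVariationOn γ (Icc T t)
              ≤ eVariationOn γ (Icc 0 T) + ENNReal.ofReal ηr := add_le_add_right hvar _
            _ ≤ V₁ := h2.le
        exact absurd (le_sSup htS) (not_le.mpr htgt)
  · push_neg at hc
    have hT0 : 0 < T := by
      rcases eq_or_lt_of_le (unitInterval.nonneg' : (0:I) ≤ T) with h | h
      · exfalso; rw [← h, hV0] at hc; exact absurd (zero_le : 0 ≤ V₁) (not_le.mpr hc)
      · exact h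
    obtain ⟨s', hlt, hvar⟩ := variation_left_approx γ hfin T hT0 hη
    have hex : ∃ s ∈ S, s' ≤ s := by
      by_contra hcon
      push_neg at hcon
      have : T ≤ s' := sSup_le (fun b hb => (hcon b hb).le)
      exact absurd this (not_le.mpr hlt)
    obtain ⟨s, hsS, hs's⟩ := hex
    have hsT : s ≤ T := le_sSup hsS
    have hkey : V₁ ≤ eVariationOn γ (Icc 0 s) + ENNReal.ofReal ηr := by
      have hadd : eVariationOn γ (Icc 0 s) + eVariationOn γ (Icc s T) =
          eVariationOn γ (Icc 0 T) := varAdd γ (unitInterval.nonneg') hsT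
      have hmono2 : eVariationOn (γ : I → X) (Icc s T) ≤ eVariationOn γ (Icc s' T) :=
        eVariationOn.mono _ (Icc_subset_Icc_left hs's)
      calc V₁ ≤ eVariationOn γ (Icc 0 T) := hc.le
        _ = eVariationOn γ (Icc 0 s) + eVariationOn γ (Icc s T) := hadd.symm
        _ ≤ eVariationOn γ (Icc 0 s) + ENNReal.ofReal ηr :=
            add_le_add_right (le_trans hmono2 hvar) _
    exact hfinish s hsS hkey

end Split

section USLSC

variable {X : Type*} [MetricSpace X]

lemma conj_null {i y : X} (g : Path i y) (δ : Path y y)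
    (h : ((g.trans δ).trans g.symm).Homotopic (Path.refl i)) : δ.Homotopic (Path.refl y) := by
  apply Quotient.exact (s := Path.Homotopic.setoid y y)
  have hq : Path.Homotopic.Quotient.trans
      (Path.Homotopic.Quotient.trans ⟦g⟧ ⟦δ⟧) (qsymm ⟦g⟧) = ⟦Path.refl i⟧ := by
    rw [qsymm_lift, ← Path.Homotopic.comp_lift, ← Path.Homotopic.comp_lift]
    exact Quotient.sound h
  have h2 := congrArg (fun q => Path.Homotopic.Quotient.trans q ⟦g⟧) hq
  erw [qcomp_assoc, qcomp_assoc, qsymm_comp, qcomp_refl, qrefl_comp] at h2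
  -- h2 : ⟦g⟧.trans ⟦δ⟧ = ⟦g⟧
  have h3 : Path.Homotopic.Quotient.trans ⟦g⟧ (⟦δ⟧ : Path.Homotopic.Quotient y y) =
      Path.Homotopic.Quotient.trans ⟦g⟧ ⟦Path.refl y⟧ := by
    erw [qcomp_refl]; exact h2
  exact qcomp_left_cancel _ _ _ h3

lemma uniform_slsc [CompactSpace X] (hg : IsGeodesicSpace X)
    (hs : SemiLocallySimplyConnected X) :
    ∃ ε : ℝ, 0 < ε ∧ ∀ (y : X) (δ : Path y y),
      range δ ⊆ Metric.ball y ε → δ.Homotopic (Path.refl y) := by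
  rcases isEmpty_or_nonempty X with hX | hX
  · exact ⟨1, one_pos, fun y => absurd (Nonempty.intro y) (by simpa using hX)⟩
  have hloc : ∀ x : X, ∃ r : ℝ, 0 < r ∧
      ∀ δ : Path x x, range δ ⊆ Metric.ball x r → δ.Homotopic (Path.refl x) := by
    intro x
    obtain ⟨U, hU, hloop⟩ := hs x
    obtain ⟨r, hr, hball⟩ := Metric.mem_nhds_iff.mp hU
    exact ⟨r, hr, fun δ hδ => hloop δ (hδ.trans hball)⟩
  choose R hRpos hR using hloc
  have hcover : (univ : Set X) ⊆ ⋃ x : X, Metric.ball x (R x / 8) := by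
    intro y _
    exact mem_iUnion.mpr ⟨y, Metric.mem_ball_self (by linarith [hRpos y])⟩
  obtain ⟨s, hscover⟩ := isCompact_univ.elim_finite_subcover
    (fun x : X => Metric.ball x (R x / 8)) (fun x => Metric.isOpen_ball) hcover
  obtain ⟨y0⟩ := hX
  have hsne : s.Nonempty := by
    obtain ⟨i, hi⟩ := mem_iUnion₂.mp (hscover (mem_univ y0))
    exact ⟨i, hi.1⟩
  set ε := s.inf' hsne (fun x => R x / 8) with hεdef
  have hεpos : 0 < ε := by
    rw [hεdef, Finset.lt_inf'_iff]
    intro b _; linarith [hRpos b]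
  refine ⟨ε, hεpos, ?_⟩
  intro y δ hδ
  obtain ⟨i, hi⟩ := mem_iUnion₂.mp (hscover (mem_univ y))
  obtain ⟨his, hyball⟩ := hi
  have hεle : ε ≤ R i / 8 := Finset.inf'_le _ his
  have hdiy : dist i y < R i / 8 := by rw [Metric.mem_ball, dist_comm] at hyball; exact hyball
  obtain ⟨g, hg_len⟩ := hg i y
  have hg_range : range g ⊆ Metric.ball i (R i / 8) := by
    apply range_subset_ball
    rw [hg_len]
    exact (ENNReal.ofReal_lt_ofReal_iff (by linarith [hRpos i])).mpr hdiy
  have hloop_range : range ((g.trans δ).trans g.symm) ⊆ Metric.ball i (R i) := by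
    rw [Path.trans_range, Path.trans_range, Path.symm_range]
    rintro p (⟨hp | hp⟩ | hp)
    · exact Metric.ball_subset_ball (by linarith [hRpos i]) (hg_range hp)
    · have := hδ hp
      rw [Metric.mem_ball] at this ⊢
      have : dist p i ≤ dist p y + dist y i := dist_triangle _ _ _
      rw [Metric.mem_ball] at *
      have h1 : dist p y < ε := hδ hp
      have h2 : dist y i < R i / 8 := by rwa [dist_comm] at hdiy
      linarith
    · exact Metric.ball_subset_ball (by linarith [hRpos i]) (hg_range hp)
  exact conj_null g δ (hR i _ hloop_range)

end USLSC

section Tilde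

variable {X : Type*} [MetricSpace X] {x₀ : X}

lemma short_paths_homotopic {ε : ℝ}
    (hslsc : ∀ (y : X) (δ : Path y y), range δ ⊆ Metric.ball y ε → δ.Homotopic (Path.refl y))
    {y z : X} (γ γ' : Path y z) (h : pathLen γ < ENNReal.ofReal ε)
    (h' : pathLen γ' < ENNReal.ofReal ε) : γ.Homotopic γ' := by
  have hrange : range (γ.trans γ'.symm) ⊆ Metric.ball y ε := by
    rw [Path.trans_range, Path.symm_range]
    exact union_subset (range_subset_ball γ h) (range_subset_ball γ' h')
  have hnull := hslsc y _ hrange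
  apply Quotient.exact (s := Path.Homotopic.setoid y z)
  have hq : Path.Homotopic.Quotient.trans ⟦γ⟧ (qsymm ⟦γ'⟧) =
      (⟦Path.refl y⟧ : Path.Homotopic.Quotient y y) := by
    rw [qsymm_lift, ← Path.Homotopic.comp_lift]
    exact Quotient.sound hnull
  have h2 := congrArg (fun q => Path.Homotopic.Quotient.trans q ⟦γ'⟧) hq
  erw [qcomp_assoc, qsymm_comp, qcomp_refl, qrefl_comp] at h2; exact h2

lemma dTilde_le {a b : PathsFrom x₀} (γ : Path a.1 b.1) (h : a.2.trans ⟦γ⟧ = b.2) :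
    dTilde a b ≤ pathLen γ :=
  iInf_le _ (⟨γ, h⟩ : {γ : Path a.1 b.1 // a.2.trans ⟦γ⟧ = b.2})

lemma exists_admissible_lt {a b : PathsFrom x₀} {C : ℝ≥0∞} (h : dTilde a b < C) :
    ∃ γ : Path a.1 b.1, a.2.trans ⟦γ⟧ = b.2 ∧ pathLen γ < C := by
  obtain ⟨⟨γ, hγ⟩, hlt⟩ := iInf_lt_iff.mp h
  exact ⟨γ, hγ, hlt⟩

lemma edist_fst_le (a b : PathsFrom x₀) : edist a.1 b.1 ≤ dTilde a b :=
  le_iInf fun p => edist_source_target_le p.1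

variable (m : MetricSpace (PathsFrom x₀))
variable (hm : ∀ a b : PathsFrom x₀, ENNReal.ofReal (letI := m; dist a b) = dTilde a b)

include hm

lemma dTilde_ne_top : ∀ a b : PathsFrom x₀, dTilde a b ≠ ⊤ := by
  intro a b; rw [← hm]; exact ENNReal.ofReal_ne_top

lemma mdist_le_iff {a b : PathsFrom x₀} {c : ℝ} (hc : 0 ≤ c) :
    (letI := m; dist a b) ≤ c ↔ dTilde a b ≤ ENNReal.ofReal c := by
  letI := m
  rw [← hm]
  exact (ENNReal.ofReal_le_ofReal_iff hc).symm

lemma mdist_fst_le (a b : PathsFrom x₀) :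
    dist a.1 b.1 ≤ (letI := m; dist a b) := by
  letI := m
  have h1 : ENNReal.ofReal (dist a.1 b.1) ≤ ENNReal.ofReal (dist a b) := by
    rw [hm, ← edist_dist]
    exact edist_fst_le a b
  exact (ENNReal.ofReal_le_ofReal_iff dist_nonneg).mp h1

end Tilde

section Lifts

variable {X : Type*} [MetricSpace X] {x₀ : X}

/-- choice of geodesics -/
noncomputable def geod (hg : IsGeodesicSpace X) (x y : X) : Path x y := (hg x y).choose

lemma geod_len (hg : IsGeodesicSpace X) (x y : X) :
    pathLen (geod hg x y) = ENNReal.ofReal (dist x y) := (hg x y).choose_spec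

/-- canonical local lift -/
noncomputable def liftP (hg : IsGeodesicSpace X) (a : PathsFrom x₀) (z : X) : PathsFrom x₀ :=
  ⟨z, a.2.trans ⟦geod hg a.1 z⟧⟩

variable (hg : IsGeodesicSpace X) {ε : ℝ} (hε : 0 < ε)
variable (hslsc : ∀ (y : X) (δ : Path y y), range δ ⊆ Metric.ball y ε → δ.Homotopic (Path.refl y))
variable (m : MetricSpace (PathsFrom x₀))
variable (hm : ∀ a b : PathsFrom x₀, ENNReal.ofReal (letI := m; dist a b) = dTilde a b)

include hg hε hslsc hm

lemma closedBall_subset_lift (a : PathsFrom x₀) {s : ℝ} (h0 : 0 ≤ s) (hsε : s < ε) :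
    (letI := m; Metric.closedBall a s) ⊆ liftP hg a '' (Metric.closedBall a.1 s) := by
  letI := m
  intro b hb
  rw [Metric.mem_closedBall, dist_comm] at hb
  have hd : dTilde a b ≤ ENNReal.ofReal s := (mdist_le_iff m hm h0).mp hb
  have hdlt : dTilde a b < ENNReal.ofReal ε :=
    lt_of_le_of_lt hd ((ENNReal.ofReal_lt_ofReal_iff hε).mpr hsε)
  obtain ⟨γ, hγadm, hγlen⟩ := exists_admissible_lt hdlt
  have hfst : dist a.1 b.1 ≤ s := le_trans (mdist_fst_le m hm a b) hb
  have hgeod_len : pathLen (geod hg a.1 b.1) < ENNReal.ofReal ε := by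
    rw [geod_len]
    exact lt_of_le_of_lt (ENNReal.ofReal_le_ofReal hfst)
      ((ENNReal.ofReal_lt_ofReal_iff hε).mpr hsε)
  have hhom : γ.Homotopic (geod hg a.1 b.1) :=
    short_paths_homotopic hslsc γ _ hγlen hgeod_len
  refine ⟨b.1, Metric.mem_closedBall.mpr (by rwa [dist_comm]), ?_⟩
  obtain ⟨b1, b2⟩ := b
  have hq : a.2.trans ⟦geod hg a.1 b1⟧ = b2 := by
    have h' : a.2.trans ⟦γ⟧ = b2 := hγadm
    rw [← h']
    exact congrArg _ (Quotient.sound hhom.symm)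
  exact congrArg (fun q => (⟨b1, q⟩ : PathsFrom x₀)) hq

lemma lift_lipschitz (a : PathsFrom x₀) {s : ℝ} (h0 : 0 ≤ s) (h3 : 3 * s < ε)
    {z z' : X} (hz : z ∈ Metric.closedBall a.1 s) (hz' : z' ∈ Metric.closedBall a.1 s) :
    (letI := m; dist (liftP hg a z) (liftP hg a z')) ≤ dist z z' := by
  letI := m
  rw [Metric.mem_closedBall, dist_comm] at hz hz'
  set g1 := geod hg a.1 z
  set g2 := geod hg a.1 z'
  set γ := geod hg z z'
  have hzz' : dist z z' ≤ 2 * s := by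
    have := dist_triangle z a.1 z'
    rw [dist_comm z a.1] at this
    linarith
  have hlen1 : pathLen (g1.trans γ) < ENNReal.ofReal ε := by
    rw [pathLen_trans, geod_len, geod_len, ← ENNReal.ofReal_add dist_nonneg dist_nonneg]
    exact (ENNReal.ofReal_lt_ofReal_iff hε).mpr (by linarith)
  have hlen2 : pathLen g2 < ENNReal.ofReal ε := by
    rw [geod_len]
    exact (ENNReal.ofReal_lt_ofReal_iff hε).mpr (by linarith)
  have hhom : (g1.trans γ).Homotopic g2 := short_paths_homotopic hslsc _ _ hlen1 hlen2
  have hadm : (liftP hg a z).2.trans ⟦γ⟧ = (liftP hg a z').2 := by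
    show (a.2.trans ⟦g1⟧).trans ⟦γ⟧ = a.2.trans ⟦g2⟧
    erw [qcomp_assoc, ← Path.Homotopic.comp_lift]
    exact congrArg _ (Quotient.sound hhom)
  have hd : dTilde (liftP hg a z) (liftP hg a z') ≤ ENNReal.ofReal (dist z z') := by
    have h1 := dTilde_le (a := liftP hg a z) (b := liftP hg a z') γ hadm
    exact h1.trans (le_of_eq (geod_len hg z z'))
  exact (mdist_le_iff m hm dist_nonneg).mpr hd

lemma small_ball_compact [CompactSpace X] (a : PathsFrom x₀) {s : ℝ} (h0 : 0 ≤ s)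
    (h3 : 3 * s < ε) : (letI := m; IsCompact (Metric.closedBall a s)) := by
  letI := m
  have hsε : s < ε := by linarith
  have hsub := closedBall_subset_lift hg hε hslsc m hm a h0 hsε
  have hlip : LipschitzOnWith 1 (liftP hg a) (Metric.closedBall a.1 s) := by
    apply LipschitzOnWith.of_dist_le_mul
    intro z hz z' hz'
    rw [NNReal.coe_one, one_mul]
    exact lift_lipschitz hg hε hslsc m hm a h0 h3 hz hz'
  have hXc : IsCompact (Metric.closedBall a.1 s) := Metric.isClosed_closedBall.isCompact
  have himg : IsCompact (liftP hg a '' Metric.closedBall a.1 s) :=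
    hXc.image_of_continuousOn hlip.continuousOn
  exact himg.of_isClosed_subset Metric.isClosed_closedBall hsub

end Lifts

section Dyadic

variable {Y : Type*} [MetricSpace Y]

lemma pathLen_le_of_lipschitz {u v : Y} (γ : Path u v) {d : ℝ} (hd0 : 0 ≤ d)
    (hl : ∀ s t : unitInterval, s ≤ t → dist (γ s) (γ t) ≤ d * ((t:ℝ) - s)) :
    pathLen γ ≤ ENNReal.ofReal d := by
  rw [pathLen, eVariationOn]
  apply iSup_le
  rintro ⟨n, u', hu'mono, -⟩
  have hterm : ∀ i, edist (γ (u' (i+1))) (γ (u' i)) ≤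
      ENNReal.ofReal (d * (u' (i+1) : ℝ) - d * (u' i : ℝ)) := by
    intro i
    rw [edist_dist, dist_comm]
    apply ENNReal.ofReal_le_ofReal
    exact le_trans (hl (u' i) (u' (i+1)) (hu'mono (Nat.le_succ i))) (le_of_eq (by ring))
  have hnonneg : ∀ i ∈ Finset.range n, 0 ≤ d * (u' (i+1) : ℝ) - d * (u' i : ℝ) := by
    intro i _
    have : (u' i : ℝ) ≤ u' (i+1) := hu'mono (Nat.le_succ i)
    nlinarith
  calc (∑ i ∈ Finset.range n, edist (γ (u' (i+1))) (γ (u' i)))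
      ≤ ∑ i ∈ Finset.range n, ENNReal.ofReal (d * (u' (i+1) : ℝ) - d * (u' i : ℝ)) :=
        Finset.sum_le_sum (fun i _ => hterm i)
    _ = ENNReal.ofReal (∑ i ∈ Finset.range n, (d * (u' (i+1) : ℝ) - d * (u' i : ℝ))) :=
        (ENNReal.ofReal_sum_of_nonneg hnonneg).symm
    _ = ENNReal.ofReal (d * (u' n : ℝ) - d * (u' 0 : ℝ)) := by
        rw [Finset.sum_range_sub (fun i => d * (u' i : ℝ))]
    _ ≤ ENNReal.ofReal d := by
        apply ENNReal.ofReal_le_ofReal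
        nlinarith [(u' n).2.2, (u' 0).2.1]

lemma isGeodesicSpace_of_midpoints
    (hmid : ∀ u v : Y, ∃ c, dist u c ≤ dist u v / 2 ∧ dist c v ≤ dist u v / 2)
    (hcomp : ∀ (u : Y) (r : ℝ), IsCompact (Metric.closedBall u r)) :
    IsGeodesicSpace Y := by
  intro a b
  set d := dist a b with hd
  have hd0 : 0 ≤ d := dist_nonneg
  choose mid hm1 hm2 using hmid
  set F : ℕ → ℕ → Y := fun k => Nat.rec (fun j => if j = 0 then a else b)
      (fun _ Fk j => if j % 2 = 0 then Fk (j / 2) else mid (Fk (j / 2)) (Fk (j / 2 + 1))) k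
    with hFdef
  have hFsucc : ∀ k j, F (k+1) j =
      if j % 2 = 0 then F k (j / 2) else mid (F k (j / 2)) (F k (j / 2 + 1)) := fun _ _ => rfl
  have hF00 : ∀ k, F k 0 = a := by
    intro k
    induction k with
    | zero => rfl
    | succ k ih => rw [hFsucc]; norm_num; exact ih
  have hFtop : ∀ k, F k (2^k) = b := by
    intro k
    induction k with
    | zero => rfl
    | succ k ih =>
      rw [hFsucc, pow_succ, if_pos (Nat.mul_mod_left _ _),
        Nat.mul_div_cancel _ (by norm_num : (0:ℕ) < 2)]
      exact ih
  have h2pos : ∀ k, (0:ℝ) < 2^k := fun k => by positivity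
  have hconsec : ∀ k i, i < 2^k → dist (F k i) (F k (i+1)) ≤ d / 2^k := by
    intro k
    induction k with
    | zero =>
      intro i hi
      interval_cases i
      show dist a b ≤ d / 2^0
      simp [hd]
    | succ k ih =>
      intro i hi
      have h2k : (0:ℕ) < 2^k := Nat.pow_pos (by norm_num)
      have hpow : (2:ℕ)^(k+1) = 2 * 2^k := by rw [pow_succ]; ring
      rcases Nat.even_or_odd i with ⟨q, hq⟩ | ⟨q, hq⟩
      · have hiq : i = 2 * q := by omega
        subst hiq
        have hqk : q < 2^k := by omega
        have e1 : F (k+1) (2*q) = F k q := by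
          rw [hFsucc, if_pos (by omega : (2*q) % 2 = 0)]
          congr 1
          omega
        have e2 : F (k+1) (2*q+1) = mid (F k q) (F k (q+1)) := by
          rw [hFsucc, if_neg (by omega : ¬ (2*q+1) % 2 = 0)]
          congr 2 <;> omega
        rw [e1, e2]
        refine le_trans (hm1 (F k q) (F k (q+1))) ?_
        have := ih q hqk
        rw [pow_succ]
        have h2k' := h2pos k
        calc dist (F k q) (F k (q+1)) / 2 ≤ (d / 2^k) / 2 := by linarith
          _ = d / (2^k * 2) := by ring
      · have hiq : i = 2 * q + 1 := by omega
        subst hiq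
        have hqk : q < 2^k := by omega
        have e1 : F (k+1) (2*q+1) = mid (F k q) (F k (q+1)) := by
          rw [hFsucc, if_neg (by omega : ¬ (2*q+1) % 2 = 0)]
          congr 2 <;> omega
        have e2 : F (k+1) (2*q+1+1) = F k (q+1) := by
          rw [hFsucc, if_pos (by omega : (2*q+1+1) % 2 = 0)]
          congr 1
          omega
        rw [e1, e2]
        refine le_trans (hm2 (F k q) (F k (q+1))) ?_
        have := ih q hqk
        rw [pow_succ]
        have h2k' := h2pos k
        calc dist (F k q) (F k (q+1)) / 2 ≤ (d / 2^k) / 2 := by linarith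
          _ = d / (2^k * 2) := by ring
  have hchain : ∀ k i j, i ≤ j → j ≤ 2^k →
      dist (F k i) (F k j) ≤ ((j:ℝ) - (i:ℝ)) * (d / 2^k) := by
    intro k i j hij hj
    induction j, hij using Nat.le_induction with
    | base => simp
    | succ j hij ih =>
      have hj' : j ≤ 2^k := le_of_lt hj
      have hjlt : j < 2^k := hj
      have h1 := ih hj'
      have h2 := hconsec k j hjlt
      have h3 := dist_triangle (F k i) (F k j) (F k (j+1))
      have hd2k : 0 ≤ d / 2^k := div_nonneg hd0 (h2pos k).le
      push_cast
      push_cast at h1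
      nlinarith
  have hdista : ∀ k i, i ≤ 2^k → dist a (F k i) ≤ d := by
    intro k i hi
    have h1 := hchain k 0 i (Nat.zero_le _) hi
    rw [hF00] at h1
    refine le_trans h1 ?_
    have hcast : ((i:ℝ)) ≤ (2:ℝ)^k := by
      calc ((i:ℝ)) ≤ ((2^k : ℕ) : ℝ) := by exact_mod_cast hi
        _ = (2:ℝ)^k := by push_cast; ring
    have hd2k : 0 ≤ d / 2^k := div_nonneg hd0 (h2pos k).le
    have heq : ((i:ℝ) - ((0:ℕ):ℝ)) * (d / 2^k) = (i:ℝ) * (d / 2^k) := by push_cast; ring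
    rw [heq]
    calc ((i:ℝ)) * (d / 2^k) ≤ (2:ℝ)^k * (d / 2^k) := by nlinarith
      _ = d := by field_simp
  set seq : unitInterval → ℕ → Y := fun t n => F n ⌊(t:ℝ) * 2^n⌋₊ with hseqdef
  have hflmem : ∀ (t : unitInterval) (n : ℕ), ⌊(t:ℝ) * 2^n⌋₊ ≤ 2^n := by
    intro t n
    have h1 : (t:ℝ) * 2^n ≤ ((2^n : ℕ) : ℝ) := by
      have := t.2.2
      push_cast
      nlinarith [h2pos n]
    exact le_trans (Nat.floor_le_floor h1) (le_of_eq (Nat.floor_natCast _))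
  have hflnonneg : ∀ (t : unitInterval) (n : ℕ), (0:ℝ) ≤ (t:ℝ) * 2^n := fun t n =>
    mul_nonneg t.2.1 (h2pos n).le
  have hstep : ∀ (t : unitInterval) (n : ℕ),
      dist (seq t n) (seq t (n+1)) ≤ d * (1/2)^n := by
    intro t n
    set j1 := ⌊(t:ℝ) * 2^n⌋₊ with hj1
    set j2 := ⌊(t:ℝ) * 2^(n+1)⌋₊ with hj2
    have hcross : F n j1 = F (n+1) (2*j1) := by
      rw [hFsucc, if_pos (by omega : (2*j1) % 2 = 0)]
      congr 1
      omega
    have hlow : 2*j1 ≤ j2 := by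
      rw [hj2]
      apply Nat.le_floor
      have h1 : ((j1:ℝ)) ≤ (t:ℝ) * 2^n := Nat.floor_le (hflnonneg t n)
      push_cast
      calc ((2:ℝ) * j1) ≤ 2 * ((t:ℝ) * 2^n) := by linarith
        _ = (t:ℝ) * 2^(n+1) := by ring
    have hhigh : j2 ≤ 2*j1 + 1 := by
      have h1 : (t:ℝ) * 2^n < (j1:ℝ) + 1 := Nat.lt_floor_add_one _
      have h2 : (t:ℝ) * 2^(n+1) < ((2*j1+2 : ℕ) : ℝ) := by
        have hp : (t:ℝ) * 2^(n+1) = 2 * ((t:ℝ) * 2^n) := by ring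
        push_cast
        linarith
      have := Nat.floor_lt (hflnonneg t (n+1)) |>.mpr h2
      omega
    have hj2le : j2 ≤ 2^(n+1) := hflmem t (n+1)
    have hch := hchain (n+1) (2*j1) j2 hlow hj2le
    show dist (F n j1) (F (n+1) j2) ≤ d * (1/2)^n
    rw [hcross]
    refine le_trans hch ?_
    have hd2k : 0 ≤ d / 2^(n+1) := div_nonneg hd0 (h2pos (n+1)).le
    have hdiff : ((j2:ℝ)) - ((2*j1 : ℕ):ℝ) ≤ 1 := by
      have : (j2:ℝ) ≤ ((2*j1+1 : ℕ):ℝ) := by exact_mod_cast hhigh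
      push_cast at this ⊢
      linarith
    calc ((j2:ℝ) - ((2*j1 : ℕ):ℝ)) * (d / 2^(n+1)) ≤ 1 * (d / 2^(n+1)) := by
          apply mul_le_mul_of_nonneg_right hdiff hd2k
      _ = d * (1/2)^(n+1) := by rw [div_pow, one_pow]; ring
      _ ≤ d * (1/2)^n := by
          apply mul_le_mul_of_nonneg_left _ hd0
          apply pow_le_pow_of_le_one (by norm_num) (by norm_num) (Nat.le_succ n)
  have hCauchy : ∀ t, CauchySeq (seq t) := fun t =>
    cauchySeq_of_le_geometric (1/2) d (by norm_num) (hstep t)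
  have hmem : ∀ t n, seq t n ∈ Metric.closedBall a d := by
    intro t n
    rw [Metric.mem_closedBall, dist_comm]
    exact hdista n _ (hflmem t n)
  have hconv : ∀ t, ∃ c ∈ Metric.closedBall a d, Filter.Tendsto (seq t) Filter.atTop (nhds c) :=
    fun t => cauchySeq_tendsto_of_isComplete (hcomp a d).isComplete (hmem t) (hCauchy t)
  set f : unitInterval → Y := fun t => (hconv t).choose with hfdef
  have hf : ∀ t, Filter.Tendsto (seq t) Filter.atTop (nhds (f t)) :=
    fun t => (hconv t).choose_spec.2
  have hf0 : f 0 = a := by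
    have hseq0 : seq 0 = fun _ => a := by
      funext n
      show F n ⌊((0:unitInterval):ℝ) * 2^n⌋₊ = a
      rw [Set.Icc.coe_zero, zero_mul, Nat.floor_zero, hF00]
    have := hf 0
    rw [hseq0] at this
    exact tendsto_nhds_unique this tendsto_const_nhds
  have hf1 : f 1 = b := by
    have hseq1 : seq 1 = fun _ => b := by
      funext n
      show F n ⌊((1:unitInterval):ℝ) * 2^n⌋₊ = b
      rw [Set.Icc.coe_one, one_mul, show ((2:ℝ))^n = ((2^n : ℕ) : ℝ) by push_cast; ring,
        Nat.floor_natCast, hFtop]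
    have := hf 1
    rw [hseq1] at this
    exact tendsto_nhds_unique this tendsto_const_nhds
  have hlip : ∀ s t : unitInterval, s ≤ t → dist (f s) (f t) ≤ d * ((t:ℝ) - (s:ℝ)) := by
    intro s t hst
    have hbound : ∀ n, dist (seq s n) (seq t n) ≤ d * ((t:ℝ) - (s:ℝ)) + d * (1/2)^n := by
      intro n
      set js := ⌊(s:ℝ) * 2^n⌋₊ with hjs
      set jt := ⌊(t:ℝ) * 2^n⌋₊ with hjt
      have hle : js ≤ jt := Nat.floor_le_floor
        (mul_le_mul_of_nonneg_right (Subtype.coe_le_coe.mpr hst) (h2pos n).le)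
      have hch := hchain n js jt hle (hflmem t n)
      refine le_trans hch ?_
      have h1 : ((jt:ℝ)) ≤ (t:ℝ) * 2^n := Nat.floor_le (hflnonneg t n)
      have h2 : (s:ℝ) * 2^n < (js:ℝ) + 1 := Nat.lt_floor_add_one _
      have hd2k : 0 ≤ d / 2^n := div_nonneg hd0 (h2pos n).le
      have hdiff : ((jt:ℝ)) - ((js:ℝ)) ≤ ((t:ℝ) - (s:ℝ)) * 2^n + 1 := by linarith
      calc ((jt:ℝ) - (js:ℝ)) * (d / 2^n) ≤ (((t:ℝ) - (s:ℝ)) * 2^n + 1) * (d / 2^n) := by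
            apply mul_le_mul_of_nonneg_right hdiff hd2k
        _ = ((t:ℝ) - (s:ℝ)) * 2^n * (d / 2^n) + d / 2^n := by ring
        _ = d * ((t:ℝ) - (s:ℝ)) + d * (1/2)^n := by
            rw [div_pow, one_pow]
            field_simp
    have htends : Filter.Tendsto (fun n => d * ((t:ℝ) - (s:ℝ)) + d * (1/2)^n)
        Filter.atTop (nhds (d * ((t:ℝ) - (s:ℝ)))) := by
      have h0 : Filter.Tendsto (fun n : ℕ => ((1:ℝ)/2)^n) Filter.atTop (nhds 0) :=
        tendsto_pow_atTop_nhds_zero_of_lt_one (by norm_num) (by norm_num)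
      simpa using tendsto_const_nhds.add (h0.const_mul d)
    exact le_of_tendsto_of_tendsto' ((hf s).dist (hf t)) htends hbound
  have hlipW : LipschitzWith (Real.toNNReal d) f := by
    apply LipschitzWith.of_dist_le_mul
    intro s t
    rw [Real.coe_toNNReal _ hd0, Subtype.dist_eq, Real.dist_eq]
    rcases le_total s t with h | h
    · rw [abs_of_nonpos (by simpa using Subtype.coe_le_coe.mpr h)]
      exact le_trans (hlip s t h) (le_of_eq (by ring))
    · rw [abs_of_nonneg (by simpa using Subtype.coe_le_coe.mpr h), dist_comm]
      exact hlip t s h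
  refine ⟨⟨⟨f, hlipW.continuous⟩, hf0, hf1⟩, ?_⟩
  apply le_antisymm
  · exact pathLen_le_of_lipschitz _ hd0 hlip
  · have := edist_source_target_le (⟨⟨f, hlipW.continuous⟩, hf0, hf1⟩ : Path a b)
    rwa [edist_dist] at this

end Dyadic

section Proper

variable {X : Type*} [MetricSpace X] {x₀ : X}
variable (hg : IsGeodesicSpace X) {ε : ℝ} (hε : 0 < ε)
variable (hslsc : ∀ (y : X) (δ : Path y y), range δ ⊆ Metric.ball y ε → δ.Homotopic (Path.refl y))
variable (m : MetricSpace (PathsFrom x₀))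
variable (hm : ∀ a b : PathsFrom x₀, ENNReal.ofReal (letI := m; dist a b) = dTilde a b)

include hg hε hslsc hm

lemma ball_compact_all [CompactSpace X] :
    letI := m; ∀ (n : ℕ) (a : PathsFrom x₀), IsCompact (Metric.closedBall a ((n:ℝ) * (ε/16))) := by
  letI := m
  have hh : (0:ℝ) < ε/16 := by linarith
  intro n
  induction n with
  | zero =>
    intro a
    simp only [Nat.cast_zero, zero_mul]
    rw [Metric.closedBall_zero]
    exact isCompact_singleton
  | succ n ih =>
    intro a
    set h : ℝ := ε/16 with hhdef
    have hK : IsCompact (Metric.closedBall a ((n:ℝ) * h)) := ih a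
    have hKcover : Metric.closedBall a ((n:ℝ) * h) ⊆
        ⋃ c ∈ Metric.closedBall a ((n:ℝ) * h), Metric.ball c (h/4) := by
      intro c hc
      exact mem_biUnion hc (Metric.mem_ball_self (by linarith))
    obtain ⟨t, htsub, htfin, htcover⟩ := hK.elim_finite_subcover_image
      (fun c _ => Metric.isOpen_ball) hKcover
    have hsub : Metric.closedBall a (((n:ℕ)+1 : ℝ) * h) ⊆
        ⋃ c ∈ t, Metric.closedBall c (2*h) := by
      intro b hb
      rw [Metric.mem_closedBall] at hb
      by_cases hsm : (dist b a ≤ (n:ℝ) * h)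
      · obtain ⟨c, hct, hbc⟩ := mem_iUnion₂.mp (htcover (Metric.mem_closedBall.mpr hsm))
        refine mem_biUnion hct ?_
        rw [Metric.mem_closedBall]
        have := Metric.mem_ball.mp hbc
        linarith
      · push_neg at hsm
        have hnh0 : (0:ℝ) ≤ (n:ℝ) * h := by positivity
        have hn1h0 : (0:ℝ) ≤ ((n:ℝ)+1) * h := by positivity
        have hd1 : dTilde a b ≤ ENNReal.ofReal (((n:ℝ)+1)*h) := by
          rw [← hm]
          apply ENNReal.ofReal_le_ofReal
          rwa [dist_comm] at hb
        have hdlt : dTilde a b < ENNReal.ofReal (((n:ℝ)+1)*h + h/4) :=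
          lt_of_le_of_lt hd1 (by
            apply ENNReal.ofReal_lt_ofReal_iff (by positivity) |>.mpr
            linarith)
        obtain ⟨γ, hγadm, hγlen⟩ := exists_admissible_lt hdlt
        have hfin : pathLen γ ≠ ⊤ := hγlen.ne_top
        have hV₁ : ENNReal.ofReal ((n:ℝ)*h) ≤ pathLen γ := by
          calc ENNReal.ofReal ((n:ℝ)*h) ≤ ENNReal.ofReal (dist b a) :=
                ENNReal.ofReal_le_ofReal hsm.le
            _ = ENNReal.ofReal (dist a b) := by rw [dist_comm]
            _ = dTilde a b := hm a b
            _ ≤ pathLen γ := dTilde_le γ hγadm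
        obtain ⟨t', hA, hB⟩ := exists_split γ hfin (ENNReal.ofReal ((n:ℝ)*h)) hV₁
          (by linarith : (0:ℝ) < h/4)
        set c : PathsFrom x₀ := ⟨γ t', a.2.trans ⟦subLeft γ t'⟧⟩ with hcdef
        have hac : dTilde a c ≤ ENNReal.ofReal ((n:ℝ)*h) := by
          have := dTilde_le (a := a) (b := c) (subLeft γ t') rfl
          rw [pathLen_subLeft] at this
          exact this.trans hA
        have hdistac : dist a c ≤ (n:ℝ)*h := (mdist_le_iff m hm hnh0).mpr hac
        have hadm' : c.2.trans ⟦subRight γ t'⟧ = b.2 := by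
          show (a.2.trans ⟦subLeft γ t'⟧).trans ⟦subRight γ t'⟧ = b.2
          erw [qcomp_assoc, ← Path.Homotopic.comp_lift, ← hγadm]
          exact congrArg _ (Quotient.sound (subLeft_trans_subRight_homotopic γ t'))
        have hBle : eVariationOn γ (Icc t' 1) ≤ ENNReal.ofReal (3*h/2) := by
          have h1 : eVariationOn γ (Icc t' 1) + ENNReal.ofReal ((n:ℝ)*h) ≤
              ENNReal.ofReal (3*h/2) + ENNReal.ofReal ((n:ℝ)*h) := by
            refine le_trans hB ?_
            calc pathLen γ + ENNReal.ofReal (h/4)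
                ≤ ENNReal.ofReal (((n:ℝ)+1)*h + h/4) + ENNReal.ofReal (h/4) :=
                  add_le_add_left hγlen.le _
              _ = ENNReal.ofReal (((n:ℝ)+1)*h + h/4 + h/4) := by
                  rw [← ENNReal.ofReal_add (by positivity) (by linarith)]
              _ = ENNReal.ofReal (3*h/2 + (n:ℝ)*h) := by congr 1; ring
              _ = ENNReal.ofReal (3*h/2) + ENNReal.ofReal ((n:ℝ)*h) := by
                  rw [ENNReal.ofReal_add (by linarith) hnh0]
          exact (ENNReal.add_le_add_iff_right ENNReal.ofReal_ne_top).mp h1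
        have hcb : dTilde c b ≤ ENNReal.ofReal (3*h/2) := by
          have := dTilde_le (a := c) (b := b) (subRight γ t') hadm'
          rw [pathLen_subRight] at this
          exact this.trans hBle
        have hdistcb : dist c b ≤ 3*h/2 := (mdist_le_iff m hm (by linarith)).mpr hcb
        have hcK : c ∈ Metric.closedBall a ((n:ℝ)*h) := by
          rw [Metric.mem_closedBall, dist_comm]
          exact hdistac
        obtain ⟨c', hc't, hcc'⟩ := mem_iUnion₂.mp (htcover hcK)
        refine mem_biUnion hc't ?_
        rw [Metric.mem_closedBall]
        have h1 : dist c c' < h/4 := Metric.mem_ball.mp hcc'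
        calc dist b c' ≤ dist b c + dist c c' := dist_triangle _ _ _
          _ ≤ 3*h/2 + h/4 := by
              rw [dist_comm] at hdistcb
              linarith
          _ ≤ 2*h := by linarith
    have hcpt : IsCompact (⋃ c ∈ t, Metric.closedBall c (2*h)) := by
      apply htfin.isCompact_biUnion
      intro c _
      exact small_ball_compact hg hε hslsc m hm c (by linarith) (by rw [hhdef]; linarith)
    refine hcpt.of_isClosed_subset Metric.isClosed_closedBall ?_
    have : (((n+1):ℕ) : ℝ) = (n:ℝ) + 1 := by push_cast; ring
    rw [this]
    exact hsub

lemma approx_mid (u v : PathsFrom x₀) {σ : ℝ} (hσ : 0 < σ) :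
    letI := m; ∃ c : PathsFrom x₀,
      dist u c ≤ dist u v / 2 + σ ∧ dist c v ≤ dist u v / 2 + σ := by
  letI := m
  set d := dist u v with hddef
  have hd0 : 0 ≤ d := dist_nonneg
  have hdlt : dTilde u v < ENNReal.ofReal (d + σ/2) := by
    rw [← hm]
    exact (ENNReal.ofReal_lt_ofReal_iff (by linarith)).mpr (by linarith)
  obtain ⟨γ, hγadm, hγlen⟩ := exists_admissible_lt hdlt
  have hfin : pathLen γ ≠ ⊤ := hγlen.ne_top
  have hV₁ : ENNReal.ofReal (d/2) ≤ pathLen γ := by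
    calc ENNReal.ofReal (d/2) ≤ ENNReal.ofReal d := ENNReal.ofReal_le_ofReal (by linarith)
      _ = dTilde u v := hm u v
      _ ≤ pathLen γ := dTilde_le γ hγadm
  obtain ⟨t, hA, hB⟩ := exists_split γ hfin (ENNReal.ofReal (d/2)) hV₁
    (by linarith : (0:ℝ) < σ/2)
  refine ⟨⟨γ t, u.2.trans ⟦subLeft γ t⟧⟩, ?_, ?_⟩
  · have h1 : dTilde u ⟨γ t, u.2.trans ⟦subLeft γ t⟧⟩ ≤ ENNReal.ofReal (d/2) := by
      have := dTilde_le (a := u) (b := ⟨γ t, u.2.trans ⟦subLeft γ t⟧⟩) (subLeft γ t) rfl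
      rw [pathLen_subLeft] at this
      exact this.trans hA
    have := (mdist_le_iff m hm (by linarith : (0:ℝ) ≤ d/2)).mpr h1
    linarith
  · have hadm' : (⟨γ t, u.2.trans ⟦subLeft γ t⟧⟩ : PathsFrom x₀).2.trans ⟦subRight γ t⟧ = v.2 := by
      show (u.2.trans ⟦subLeft γ t⟧).trans ⟦subRight γ t⟧ = v.2
      erw [qcomp_assoc, ← Path.Homotopic.comp_lift, ← hγadm]
      exact congrArg _ (Quotient.sound (subLeft_trans_subRight_homotopic γ t))
    have hBle : eVariationOn γ (Icc t 1) ≤ ENNReal.ofReal (d/2 + σ) := by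
      have h1 : eVariationOn γ (Icc t 1) + ENNReal.ofReal (d/2) ≤
          ENNReal.ofReal (d/2 + σ) + ENNReal.ofReal (d/2) := by
        refine le_trans hB ?_
        calc pathLen γ + ENNReal.ofReal (σ/2)
            ≤ ENNReal.ofReal (d + σ/2) + ENNReal.ofReal (σ/2) := add_le_add_left hγlen.le _
          _ = ENNReal.ofReal (d + σ/2 + σ/2) := by
              rw [← ENNReal.ofReal_add (by linarith) (by linarith)]
          _ = ENNReal.ofReal (d/2 + σ + d/2) := by congr 1; ring
          _ = ENNReal.ofReal (d/2 + σ) + ENNReal.ofReal (d/2) := by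
              rw [ENNReal.ofReal_add (by linarith) (by linarith)]
      exact (ENNReal.add_le_add_iff_right ENNReal.ofReal_ne_top).mp h1
    have h2 : dTilde (⟨γ t, u.2.trans ⟦subLeft γ t⟧⟩ : PathsFrom x₀) v ≤
        ENNReal.ofReal (d/2 + σ) := by
      have := dTilde_le (a := (⟨γ t, u.2.trans ⟦subLeft γ t⟧⟩ : PathsFrom x₀)) (b := v)
        (subRight γ t) hadm'
      rw [pathLen_subRight] at this
      exact this.trans hBle
    exact (mdist_le_iff m hm (by linarith : (0:ℝ) ≤ d/2 + σ)).mpr h2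

lemma exists_mid
    (hcomp : letI := m; ∀ (a : PathsFrom x₀) (r : ℝ), IsCompact (Metric.closedBall a r)) :
    letI := m; ∀ u v : PathsFrom x₀,
      ∃ c, dist u c ≤ dist u v / 2 ∧ dist c v ≤ dist u v / 2 := by
  letI := m
  intro u v
  set d := dist u v with hddef
  have hd0 : 0 ≤ d := dist_nonneg
  have happ : ∀ n : ℕ, ∃ c : PathsFrom x₀,
      dist u c ≤ d/2 + 1/((n:ℝ)+1) ∧ dist c v ≤ d/2 + 1/((n:ℝ)+1) := by
    intro n
    exact approx_mid hg hε hslsc m hm u v (by positivity : (0:ℝ) < 1/((n:ℝ)+1))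
  choose cs hc1 hc2 using happ
  have hmem : ∀ n, cs n ∈ Metric.closedBall u (d/2 + 1) := by
    intro n
    rw [Metric.mem_closedBall, dist_comm]
    have h1 : 1/((n:ℝ)+1) ≤ 1 := by
      rw [div_le_one (by positivity)]
      have : (0:ℝ) ≤ n := Nat.cast_nonneg n
      linarith
    linarith [hc1 n]
  obtain ⟨c, -, φ, hφ, htend⟩ := (hcomp u (d/2+1)).tendsto_subseq hmem
  have hφge : ∀ n : ℕ, (n:ℝ) ≤ (φ n : ℝ) := fun n => by exact_mod_cast hφ.le_apply
  have hmono : ∀ n, 1/((φ n : ℝ)+1) ≤ 1/((n:ℝ)+1) := fun n =>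
    one_div_le_one_div_of_le (by positivity) (by linarith [hφge n])
  have hrhstend : Filter.Tendsto (fun n : ℕ => d/2 + 1/((n:ℝ)+1))
      Filter.atTop (nhds (d/2)) := by
    simpa using tendsto_const_nhds.add (tendsto_one_div_add_atTop_nhds_zero_nat (𝕜 := ℝ))
  refine ⟨c, ?_, ?_⟩
  · refine le_of_tendsto_of_tendsto' (tendsto_const_nhds.dist htend) hrhstend ?_
    intro n
    exact le_trans (hc1 (φ n)) (by linarith [hmono n])
  · refine le_of_tendsto_of_tendsto' (htend.dist tendsto_const_nhds) hrhstend ?_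
    intro n
    exact le_trans (hc2 (φ n)) (by linarith [hmono n])

end Proper

end StmtAux

end

/-- `(X̃, d)` is a proper geodesic metric space. -/
theorem stmt5 {X : Type*} [MetricSpace X] [CompactSpace X] [ConnectedSpace X]
    [LocallyConnectedSpace X] (hg : IsGeodesicSpace X)
    (hs : SemiLocallySimplyConnected X) (x₀ : X)
    (m : MetricSpace (PathsFrom x₀))
    (hm : ∀ a b : PathsFrom x₀,
      ENNReal.ofReal (letI := m; dist a b) = dTilde a b) :
    letI := m
    ProperSpace (PathsFrom x₀) ∧ IsGeodesicSpace (PathsFrom x₀) := by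
  obtain ⟨ε, hε, hslsc⟩ := StmtAux.uniform_slsc hg hs
  letI := m
  have hcompn := StmtAux.ball_compact_all hg hε hslsc m hm
  have hcomp : ∀ (a : PathsFrom x₀) (r : ℝ), IsCompact (Metric.closedBall a r) := by
    intro a r
    obtain ⟨n, hn⟩ := exists_nat_ge (r / (ε/16))
    have hle : r ≤ (n:ℝ) * (ε/16) := by
      rw [div_le_iff₀ (by linarith : (0:ℝ) < ε/16)] at hn
      linarith
    exact (hcompn n a).of_isClosed_subset Metric.isClosed_closedBall
      (Metric.closedBall_subset_closedBall hle)
  exact ⟨⟨hcomp⟩, StmtAux.isGeodesicSpace_of_midpoints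
    (StmtAux.exists_mid hg hε hslsc m hm hcomp) hcomp⟩
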